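/- Null persistence under conditioning: if f : 𝒮 → [0,∞] satisfies Īf = 0 and k ≥ 0, then Ī(Ī_k f) ≤ Īf; hence Ī_k f is a null function whenever f is a null function, i.e., Ī_k f = 0 holds Ī-almost everywhere. -/

import Mathlib

open Filter Set
open scoped Classical ENNReal

noncomputable section

abbrev Traj := ℕ → ℝ

/-- Portfolio value `Π^{V,H}_{j,n}`. -/
def PiVal (j n : ℕ) (V : ℝ) (H : ℕ → Traj → ℝ) (y : Traj) : ℝ :=
  V + ∑ i ∈ Finset.Ico j n, H i y * (y (i + 1) - y i)

/-- Non-anticipativity of a sequence of functions on a set of trajectories. -/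
def NonAnticipOn (A : Set Traj) (H : ℕ → Traj → ℝ) : Prop :=
  ∀ i, ∀ x ∈ A, ∀ y ∈ A, (∀ k ≤ i, x k = y k) → H i x = H i y

/-- Non-anticipativity (at time `j`) of a single extended-real-valued function. -/
def NonAnticipF (A : Set Traj) (j : ℕ) (g : Traj → EReal) : Prop :=
  ∀ x ∈ A, ∀ y ∈ A, (∀ k ≤ j, x k = y k) → g x = g y

/-- Conditional space `𝒮_{(x,j)}`. -/
def Cond (𝒮 : Set Traj) (x : Traj) (j : ℕ) : Set Traj :=
  {y ∈ 𝒮 | ∀ i ≤ j, y i = x i}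

/-- `liminf_{n→∞} Π^{V,H}_{j,n}` as a value in `[0,∞]`. -/
def limInfVal (j : ℕ) (V : ℝ) (H : ℕ → Traj → ℝ) (y : Traj) : ℝ≥0∞ :=
  Filter.liminf (fun n => ENNReal.ofReal (PiVal j n V H y)) Filter.atTop

/-- The conditional null operator `Ī_j` on a set `A` of trajectories. -/
def IUpOn (A : Set Traj) (j : ℕ) (f : Traj → ℝ≥0∞) : ℝ≥0∞ :=
  sInf { c | ∃ (V : ℕ → ℝ) (H : ℕ → ℕ → Traj → ℝ),
    (∀ m, NonAnticipOn A (H m)) ∧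
    (∀ m n, ∀ y ∈ A, 0 ≤ PiVal j n (V m) (H m) y) ∧
    (∀ y ∈ A, f y ≤ ∑' m, limInfVal j (V m) (H m) y) ∧
    c = ∑' m, ENNReal.ofReal (V m) }

/-- `Ī_j f (x)`, conditioned on the node `(x,j)`. -/
def IUp (𝒮 : Set Traj) (j : ℕ) (f : Traj → ℝ≥0∞) (x : Traj) : ℝ≥0∞ :=
  IUpOn (Cond 𝒮 x j) j f

/-- The conditional superhedging outer integral on a set `A`, starting at time `j`. -/
def sigmaUpOn (A : Set Traj) (j : ℕ) (f : Traj → EReal) : EReal :=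
  sInf { c : EReal | ∃ (V0 : ℝ) (H0 : ℕ → Traj → ℝ) (n0 : ℕ) (V : ℕ → ℝ)
      (H : ℕ → ℕ → Traj → ℝ),
    NonAnticipOn A H0 ∧ (∀ m, NonAnticipOn A (H m)) ∧
    (∀ m n, ∀ y ∈ A, 0 ≤ PiVal j n (V m) (H m) y) ∧
    (∀ y ∈ A, f y ≤ (PiVal j n0 V0 H0 y : EReal) +
      ((∑' m, limInfVal j (V m) (H m) y : ℝ≥0∞) : EReal)) ∧
    c = (V0 : EReal) + ((∑' m, ENNReal.ofReal (V m) : ℝ≥0∞) : EReal) }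

/-- `σ̄_j f (x)`. -/
def sigmaUp (𝒮 : Set Traj) (j : ℕ) (f : Traj → EReal) (x : Traj) : EReal :=
  sigmaUpOn (Cond 𝒮 x j) j f

/-- `σ̲_j f (x) = -σ̄_j (-f)(x)`. -/
def sigmaDown (𝒮 : Set Traj) (j : ℕ) (f : Traj → EReal) (x : Traj) : EReal :=
  - sigmaUp 𝒮 j (fun y => - f y) x

/-- A set is `Ī`-null. -/
def NullSet (𝒮 : Set Traj) (E : Set Traj) : Prop :=
  IUpOn 𝒮 0 (fun y => if y ∈ E then 1 else 0) = 0

/-- A property holds `Ī`-almost everywhere on `𝒮`. -/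
def AEOn (𝒮 : Set Traj) (P : Traj → Prop) : Prop :=
  NullSet 𝒮 {y ∈ 𝒮 | ¬ P y}

/-- Property `(L_{(x,j)})`, continuity from below at the node `(x,j)`. -/
def PropL (𝒮 : Set Traj) (x : Traj) (j : ℕ) : Prop :=
  ∀ (V0 : ℝ) (H0 : ℕ → Traj → ℝ) (n0 : ℕ) (V : ℕ → ℝ) (H : ℕ → ℕ → Traj → ℝ),
    NonAnticipOn (Cond 𝒮 x j) H0 → (∀ m, NonAnticipOn (Cond 𝒮 x j) (H m)) →
    (∀ m n, ∀ y ∈ Cond 𝒮 x j, 0 ≤ PiVal j n (V m) (H m) y) →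
    (∀ y ∈ Cond 𝒮 x j, (PiVal j n0 V0 H0 y : EReal) ≤
      ((∑' m, limInfVal j (V m) (H m) y : ℝ≥0∞) : EReal)) →
    (V0 : EReal) ≤ ((∑' m, ENNReal.ofReal (V m) : ℝ≥0∞) : EReal)

/-- Assumption `(L)`-a.e. -/
def LaeAssumption (𝒮 : Set Traj) : Prop :=
  (∀ x ∈ 𝒮, PropL 𝒮 x 0) ∧ NullSet 𝒮 {x ∈ 𝒮 | ∃ j, ¬ PropL 𝒮 x j}

/-- Up-down node. -/
def UpDownNode (𝒮 : Set Traj) (x : Traj) (j : ℕ) : Prop :=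
  (∃ y ∈ Cond 𝒮 x j, x j < y (j + 1)) ∧ (∃ y ∈ Cond 𝒮 x j, y (j + 1) < x j)

/-- Flat node. -/
def FlatNode (𝒮 : Set Traj) (x : Traj) (j : ℕ) : Prop :=
  ∀ y ∈ Cond 𝒮 x j, y (j + 1) = x j

/-- Arbitrage node. -/
def ArbitrageNode (𝒮 : Set Traj) (x : Traj) (j : ℕ) : Prop :=
  ¬ UpDownNode 𝒮 x j ∧ ¬ FlatNode 𝒮 x j

/-- Type II arbitrage node. -/
def TypeIINode (𝒮 : Set Traj) (x : Traj) (j : ℕ) : Prop :=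
  ArbitrageNode 𝒮 x j ∧ ¬ ∃ y ∈ Cond 𝒮 x j, y (j + 1) = x j

/-- Trajectory based stopping time. -/
def StoppingTime (𝒮 : Set Traj) (τ : Traj → ℕ∞) : Prop :=
  ∀ x ∈ 𝒮, ∀ y ∈ 𝒮, (∀ k : ℕ, (k : ℕ∞) ≤ τ x → x k = y k) → τ x = τ y

/-- `⊤`-dominant addition on `EReal`, implementing the convention `∞ + (−∞) = ∞`. -/
def eadd (a b : EReal) : EReal := if a = ⊤ ∨ b = ⊤ then ⊤ else a + b

/-- Subtraction `u − v = u + (−v)` with the convention `∞ + (−∞) = ∞`. -/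
def esub (a b : EReal) : EReal := eadd a (-b)

/-- Supermartingale. -/
def TrajSupermartingale (𝒮 : Set Traj) (f : ℕ → Traj → EReal) : Prop :=
  (∀ j, NonAnticipF 𝒮 j (f j)) ∧
  ∀ j, AEOn 𝒮 (fun x => sigmaUp 𝒮 j (f (j + 1)) x ≤ f j x)


private lemma pival_agree (A : Set Traj) {H : ℕ → Traj → ℝ} (hH : NonAnticipOn A H)
    (V : ℝ) (k : ℕ) {x y : Traj} (hx : x ∈ A) (hy : y ∈ A)
    (hagree : ∀ i ≤ k, y i = x i) : PiVal 0 k V H y = PiVal 0 k V H x := by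
  unfold PiVal
  congr 1
  refine Finset.sum_congr rfl fun i hi => ?_
  rw [Finset.mem_Ico] at hi
  have h1 : H i y = H i x := hH i y hy x hx fun j hj => hagree j (by omega)
  rw [h1, hagree i (by omega), hagree (i + 1) (by omega)]

private lemma pival_chain {k n : ℕ} (hkn : k ≤ n) (V : ℝ) (H : ℕ → Traj → ℝ) (y : Traj) :
    PiVal k n (PiVal 0 k V H y) H y = PiVal 0 n V H y := by
  unfold PiVal
  rw [add_assoc, Finset.sum_Ico_consecutive _ (Nat.zero_le k) hkn]

private lemma pival_trunc (k n : ℕ) (V : ℝ) (H : ℕ → Traj → ℝ) (y : Traj) :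
    PiVal 0 n V (fun i z => if i < k then H i z else 0) y = PiVal 0 (min n k) V H y := by
  unfold PiVal
  congr 1
  have h : ∀ i, (if i < k then H i y else 0) * (y (i + 1) - y i)
      = if i < k then H i y * (y (i + 1) - y i) else 0 := by
    intro i; split <;> simp
  simp_rw [h]
  rw [← Finset.sum_filter]
  have hset : (Finset.Ico 0 n).filter (fun i => i < k) = Finset.Ico 0 (min n k) := by
    ext i; simp only [Finset.mem_filter, Finset.mem_Ico]; omega
  rw [hset]

private lemma limInf_trunc (k : ℕ) (V : ℝ) (H : ℕ → Traj → ℝ) (y : Traj) :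
    limInfVal 0 V (fun i z => if i < k then H i z else 0) y
      = ENNReal.ofReal (PiVal 0 k V H y) := by
  unfold limInfVal
  have h : ∀ᶠ n in atTop, ENNReal.ofReal (PiVal 0 n V (fun i z => if i < k then H i z else 0) y)
      = ENNReal.ofReal (PiVal 0 k V H y) := by
    filter_upwards [eventually_ge_atTop k] with n hn
    rw [pival_trunc, min_eq_right hn]
  rw [Filter.liminf_congr h, Filter.liminf_const]

private lemma limInf_node (A : Set Traj) {H : ℕ → Traj → ℝ} (hH : NonAnticipOn A H)
    (V : ℝ) (k : ℕ) {x y : Traj} (hx : x ∈ A) (hy : y ∈ A) (hagree : ∀ i ≤ k, y i = x i) :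
    limInfVal k (PiVal 0 k V H x) H y = limInfVal 0 V H y := by
  unfold limInfVal
  apply Filter.liminf_congr
  filter_upwards [eventually_ge_atTop k] with n hn
  rw [← pival_agree A hH V k hx hy hagree, pival_chain hn]

/-- `Ī(Ī_k f) ≤ Ī f` for nonnegative `f`; hence if `f` is a null
function, then `Ī_k f = 0` holds `Ī`-almost everywhere. -/
theorem IUp_cond_null_persistence (𝒮 : Set Traj) (k : ℕ) (f : Traj → ℝ≥0∞) :
    IUpOn 𝒮 0 (fun x => IUp 𝒮 k f x) ≤ IUpOn 𝒮 0 f ∧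
    (IUpOn 𝒮 0 f = 0 → AEOn 𝒮 (fun x => IUp 𝒮 k f x = 0)) := by
  have part1 : IUpOn 𝒮 0 (fun x => IUp 𝒮 k f x) ≤ IUpOn 𝒮 0 f := by
    unfold IUpOn
    refine le_sInf fun c hc => ?_
    obtain ⟨V, H, hNA, hPos, hSup, rfl⟩ := hc
    refine sInf_le ⟨V, fun m i z => if i < k then H m i z else 0, ?_, ?_, ?_, rfl⟩
    · intro m i x hx y hy hag
      dsimp only
      split
      · exact hNA m i x hx y hy hag
      · rfl
    · intro m n y hy
      rw [pival_trunc]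
      exact hPos m (min n k) y hy
    · intro x hx
      show IUp 𝒮 k f x ≤ _
      have hrw : ∀ m, limInfVal 0 (V m) (fun i z => if i < k then H m i z else 0) x
          = ENNReal.ofReal (PiVal 0 k (V m) (H m) x) := fun m =>
        limInf_trunc k (V m) (H m) x
      calc IUp 𝒮 k f x ≤ ∑' m, ENNReal.ofReal (PiVal 0 k (V m) (H m) x) := by
            unfold IUp IUpOn
            refine sInf_le ⟨fun m => PiVal 0 k (V m) (H m) x, H, ?_, ?_, ?_, rfl⟩
            · intro m i a ha b hb hag
              exact hNA m i a ha.1 b hb.1 hag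
            · intro m n y hy
              show 0 ≤ PiVal k n (PiVal 0 k (V m) (H m) x) (H m) y
              rcases le_or_gt k n with hkn | hnk
              · rw [← pival_agree 𝒮 (hNA m) (V m) k hx hy.1 hy.2, pival_chain hkn]
                exact hPos m n y hy.1
              · have he : PiVal k n (PiVal 0 k (V m) (H m) x) (H m) y
                    = PiVal 0 k (V m) (H m) x := by
                  unfold PiVal
                  rw [Finset.Ico_eq_empty (not_lt.mpr hnk.le), Finset.sum_empty, add_zero]
                rw [he]
                exact hPos m k x hx
            · intro y hy
              have hconv : (∑' m, limInfVal k (PiVal 0 k (V m) (H m) x) (H m) y)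
                  = ∑' m, limInfVal 0 (V m) (H m) y :=
                tsum_congr fun m => limInf_node 𝒮 (hNA m) (V m) k hx hy.1 hy.2
              rw [hconv]
              exact hSup y hy.1
        _ = ∑' m, limInfVal 0 (V m) (fun i z => if i < k then H m i z else 0) x :=
            (tsum_congr fun m => (hrw m).symm)
  refine ⟨part1, fun hf => ?_⟩
  have hg : IUpOn 𝒮 0 (fun x => IUp 𝒮 k f x) = 0 :=
    le_antisymm (hf ▸ part1) (zero_le)
  unfold AEOn NullSet
  refine le_antisymm ?_ (zero_le)
  apply ENNReal.le_of_forall_pos_le_add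
  intro ε hε _
  rw [zero_add]
  obtain ⟨δ, hδpos, hδsum⟩ :=
    ENNReal.exists_pos_sum_of_countable (ε := (ε : ℝ≥0∞))
      (by exact_mod_cast hε.ne') ℕ
  have key : ∀ p : ℕ, ∃ (V : ℕ → ℝ) (H : ℕ → ℕ → Traj → ℝ),
      (∀ m, NonAnticipOn 𝒮 (H m)) ∧ (∀ m n, ∀ y ∈ 𝒮, 0 ≤ PiVal 0 n (V m) (H m) y) ∧
      (∀ y ∈ 𝒮, IUp 𝒮 k f y ≤ ∑' m, limInfVal 0 (V m) (H m) y) ∧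
      (∑' m, ENNReal.ofReal (V m)) ≤ (δ p : ℝ≥0∞) := by
    intro p
    have hlt : IUpOn 𝒮 0 (fun x => IUp 𝒮 k f x) < (δ p : ℝ≥0∞) := by
      rw [hg]
      exact_mod_cast hδpos p
    rw [IUpOn] at hlt
    obtain ⟨c, hcmem, hclt⟩ := sInf_lt_iff.mp hlt
    obtain ⟨V, H, h1, h2, h3, rfl⟩ := hcmem
    exact ⟨V, H, h1, h2, h3, hclt.le⟩
  choose V H hNA hPos hSup hCost using key
  set e : ℕ ≃ ℕ × ℕ := (Denumerable.eqv (ℕ × ℕ)).symm with he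
  unfold IUpOn
  refine le_trans (sInf_le ⟨fun n => V (e n).1 (e n).2, fun n => H (e n).1 (e n).2,
    ?_, ?_, ?_, rfl⟩) ?_
  · intro n
    exact hNA _ _
  · intro n m y hy
    exact hPos _ _ _ y hy
  · intro y hy
    by_cases hgy : IUp 𝒮 k f y = 0
    · have hnot : y ∉ {y ∈ 𝒮 | ¬ (fun x => IUp 𝒮 k f x = 0) y} := by
        simp [Set.mem_setOf_eq, hgy]
      simp only [hnot, if_false]
      exact zero_le
    · have htop : (∑' n, limInfVal 0 (V (e n).1 (e n).2) (H (e n).1 (e n).2) y) = ⊤ := by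
        have h1 : (∑' n, limInfVal 0 (V (e n).1 (e n).2) (H (e n).1 (e n).2) y)
            = ∑' (pm : ℕ × ℕ), limInfVal 0 (V pm.1 pm.2) (H pm.1 pm.2) y :=
          e.tsum_eq (fun pm => limInfVal 0 (V pm.1 pm.2) (H pm.1 pm.2) y)
        rw [h1, ENNReal.tsum_prod (f := fun p m => limInfVal 0 (V p m) (H p m) y)]
        refine top_le_iff.mp ?_
        calc (⊤ : ℝ≥0∞) = ∑' _ : ℕ, IUp 𝒮 k f y :=
              (ENNReal.tsum_const_eq_top_of_ne_zero hgy).symm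
          _ ≤ ∑' p, ∑' m, limInfVal 0 (V p m) (H p m) y :=
              ENNReal.tsum_le_tsum fun p => hSup p y hy
      rw [htop]
      exact le_top
  · calc (∑' n, ENNReal.ofReal (V (e n).1 (e n).2))
        = ∑' (pm : ℕ × ℕ), ENNReal.ofReal (V pm.1 pm.2) :=
          e.tsum_eq (fun pm => ENNReal.ofReal (V pm.1 pm.2))
      _ = ∑' p, ∑' m, ENNReal.ofReal (V p m) :=
          ENNReal.tsum_prod (f := fun p m => ENNReal.ofReal (V p m))
      _ ≤ ∑' p, (δ p : ℝ≥0∞) := ENNReal.tsum_le_tsum hCost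
      _ ≤ (ε : ℝ≥0∞) := hδsum.le

end
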